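/- In a balanced flush abacus on 2n columns, for any bead at position b > n, the number of gaps strictly between b-2n and b is at least n and at most 2n-1. -/

import Mathlib

/-- In a balanced flush abacus on `2n` columns, for any bead at position
`b > n`, the number of gaps strictly between `b - 2n` and `b` is at least `n` and at
most `2n - 1`. -/
theorem gaps_between_bounds (n : ℕ) (hn : 1 ≤ n) (B : Set ℤ)
    (hflush : ∀ j ∈ B, j - 2 * (n : ℤ) ∈ B)
    (hbal : ∀ j : ℤ, j ∈ B ↔ (1 - j) ∉ B)
    (b : ℤ) (hb : b ∈ B) (hbn : (n : ℤ) < b) :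
    n ≤ Nat.card {j : ℤ // b - 2 * (n : ℤ) < j ∧ j < b ∧ j ∉ B} ∧
    Nat.card {j : ℤ // b - 2 * (n : ℤ) < j ∧ j < b ∧ j ∉ B} ≤ 2 * n - 1 := by
  classical
  set N : ℤ := 2 * (n : ℤ) with hN
  have hNpos : 0 < N := by positivity
  -- stepping a non-bead upward by 2n stays a non-bead
  have step : ∀ (k : ℕ) (x : ℤ), x ∉ B → x + N * k ∉ B := by
    intro k
    induction k with
    | zero => simp
    | succ k ih =>
      intro x hx hmem
      have h2 : x + N * ((k : ℤ) + 1) - N = x + N * k := by ring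
      have := hflush _ hmem
      rw [show ((k+1 : ℕ) : ℤ) = (k : ℤ) + 1 by push_cast; ring] at this
      rw [h2] at this
      exact ih x hx this
  set G : Finset ℤ := (Finset.Ioo (b - N) b).filter (fun j => j ∉ B) with hG
  set Bd : Finset ℤ := (Finset.Ioo (b - N) b).filter (fun j => j ∈ B) with hBd
  have hcard : Nat.card {j : ℤ // b - N < j ∧ j < b ∧ j ∉ B} = G.card := by
    have hset : {j : ℤ | b - N < j ∧ j < b ∧ j ∉ B} = ↑G := by
      ext j
      simp [hG, Finset.mem_Ioo, and_assoc]
    calc Nat.card {j : ℤ // b - N < j ∧ j < b ∧ j ∉ B}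
        = ({j : ℤ | b - N < j ∧ j < b ∧ j ∉ B}).ncard := Nat.card_coe_set_eq _
      _ = G.card := by rw [hset, Set.ncard_coe_finset]
  have hIoo : (Finset.Ioo (b - N) b).card = 2 * n - 1 := by
    rw [Int.card_Ioo]
    omega
  have hsum : Bd.card + G.card = 2 * n - 1 := by
    rw [hBd, hG, Finset.card_filter_add_card_filter_not, hIoo]
  -- the injection from beads to gaps
  have hinj : Bd.card ≤ G.card := by
    apply Finset.card_le_card_of_injOn (fun j => b - (b - 1 + j) % N)
    · intro j hj
      rw [hBd, Finset.mem_coe, Finset.mem_filter, Finset.mem_Ioo] at hj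
      obtain ⟨⟨hj1, hj2⟩, hjB⟩ := hj
      have hr0 : 0 ≤ (b - 1 + j) % N := Int.emod_nonneg _ (ne_of_gt hNpos)
      have hrN : (b - 1 + j) % N < N := Int.emod_lt_of_pos _ hNpos
      set q : ℤ := (b - 1 + j) / N with hq
      have hqe : N * q + (b - 1 + j) % N = b - 1 + j := Int.mul_ediv_add_emod _ _
      have hjlb : 1 - b ≤ j := by omega
      have hq0 : 0 ≤ q := Int.ediv_nonneg (by omega) hNpos.le
      have hF : b - (b - 1 + j) % N = (1 - j) + N * q := by linarith
      have hnotB : b - (b - 1 + j) % N ∉ B := by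
        rw [hF]
        have h1j : (1 - j) ∉ B := (hbal j).1 hjB
        have := step q.toNat (1 - j) h1j
        rwa [Int.toNat_of_nonneg hq0] at this
      have hne : b - (b - 1 + j) % N ≠ b := by
        intro h
        rw [h] at hnotB
        exact hnotB hb
      beta_reduce
      rw [hG, Finset.mem_coe, Finset.mem_filter, Finset.mem_Ioo]
      refine ⟨⟨by omega, ?_⟩, hnotB⟩
      omega
    · intro j hj j' hj' hFeq
      simp only [Finset.mem_coe, hBd, Finset.mem_filter, Finset.mem_Ioo] at hj hj'
      have hr : (b - 1 + j) % N = (b - 1 + j') % N := by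
        simp only at hFeq
        linarith
      have hdvd : N ∣ (j - j') := by
        have h0 : (b - 1 + j - (b - 1 + j')) % N = 0 :=
          (Int.emod_eq_emod_iff_emod_sub_eq_zero).1 hr
        have h1 : (j - j') % N = 0 := by
          rw [show b - 1 + j - (b - 1 + j') = j - j' by ring] at h0
          exact h0
        exact Int.dvd_of_emod_eq_zero h1
      obtain ⟨c, hc⟩ := hdvd
      have hb1 : -N < j - j' := by omega
      have hb2 : j - j' < N := by omega
      have hc0 : c = 0 := by
        by_contra h
        rcases lt_or_gt_of_ne h with h' | h'
        · nlinarith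
        · nlinarith
      rw [hc0, mul_zero] at hc
      omega
  constructor
  · have : n ≤ G.card := by omega
    simpa [hcard] using this
  · have : G.card ≤ 2 * n - 1 := by omega
    simpa [hcard] using this
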